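/- Let $W$ be a 4-tensor on $\mathbb{R}^n$ ($n \ge 4$) with curvature symmetries $W_{ijkl} = -W_{jikl} = -W_{ijlk} = W_{klij}$ satisfying the first Bianchi identity, viewed as a symmetric operator on $\Lambda^2 \mathbb{R}^n$. If every eigenvalue of $W$ has absolute value at most $\omega$, then $|W_{ijkl}| \le \frac{4}{3}\omega$ for all indices $i,j,k,l$. -/

import Mathlib

open Finset
open scoped RealInnerProductSpace

section Aux

variable {n : ℕ}

private lemma sum4comm (f : Fin n → Fin n → Fin n → Fin n → ℝ) :
    ∑ i, ∑ j, ∑ k, ∑ l, f i j k l = ∑ k, ∑ l, ∑ i, ∑ j, f i j k l := by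
  calc ∑ i, ∑ j, ∑ k, ∑ l, f i j k l
      = ∑ i, ∑ k, ∑ j, ∑ l, f i j k l :=
        Finset.sum_congr rfl (fun i _ => Finset.sum_comm)
    _ = ∑ k, ∑ i, ∑ j, ∑ l, f i j k l := Finset.sum_comm
    _ = ∑ k, ∑ i, ∑ l, ∑ j, f i j k l :=
        Finset.sum_congr rfl (fun k _ => Finset.sum_congr rfl (fun i _ => Finset.sum_comm))
    _ = ∑ k, ∑ l, ∑ i, ∑ j, f i j k l :=
        Finset.sum_congr rfl (fun k _ => Finset.sum_comm)

/-- the curvature operator on two-forms, as a linear map on `ℝ^{n²}`. -/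
private noncomputable def Tmap (W : Fin n → Fin n → Fin n → Fin n → ℝ) :
    EuclideanSpace ℝ (Fin n × Fin n) →ₗ[ℝ] EuclideanSpace ℝ (Fin n × Fin n) where
  toFun φ := WithLp.toLp 2 (fun p : Fin n × Fin n => (1 / 2 : ℝ) * ∑ k, ∑ l, W p.1 p.2 k l * φ (k, l))
  map_add' φ ψ := by
    apply PiLp.ext; intro p
    show (1 / 2 : ℝ) * ∑ k, ∑ l, W p.1 p.2 k l * (φ (k, l) + ψ (k, l)) = _
    simp only [mul_add, Finset.sum_add_distrib]
    show _ = (1 / 2 : ℝ) * ∑ k, ∑ l, W p.1 p.2 k l * φ (k, l)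
        + (1 / 2 : ℝ) * ∑ k, ∑ l, W p.1 p.2 k l * ψ (k, l)
    ring
  map_smul' c φ := by
    apply PiLp.ext; intro p
    show (1 / 2 : ℝ) * ∑ k, ∑ l, W p.1 p.2 k l * (c * φ (k, l))
        = c * ((1 / 2 : ℝ) * ∑ k, ∑ l, W p.1 p.2 k l * φ (k, l))
    simp only [Finset.mul_sum]
    rw [Finset.sum_comm]
    nth_rewrite 2 [Finset.sum_comm]
    refine Finset.sum_congr rfl (fun k _ => Finset.sum_congr rfl (fun l _ => by ring))

/-- the subspace of antisymmetric matrices (2-forms). -/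
private def Asub (n : ℕ) : Submodule ℝ (EuclideanSpace ℝ (Fin n × Fin n)) where
  carrier := {φ | ∀ i j : Fin n, φ (j, i) = - φ (i, j)}
  add_mem' := by
    intro a b ha hb
    intro i j
    show a (j, i) + b (j, i) = -(a (i, j) + b (i, j))
    rw [ha i j, hb i j]; ring
  zero_mem' := by intro i j; show (0 : ℝ) = -0; simp
  smul_mem' := by
    intro c a ha i j
    show c * a (j, i) = -(c * a (i, j))
    rw [ha i j]; ring


private def Qf (W : Fin n → Fin n → Fin n → Fin n → ℝ) (u v : Fin n → ℝ) : ℝ :=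
  ∑ i, ∑ j, ∑ k, ∑ l, W i j k l * (u i * v j * (u k * v l))

private lemma TinnerL (W : Fin n → Fin n → Fin n → Fin n → ℝ)
    (φ ψ : EuclideanSpace ℝ (Fin n × Fin n)) :
    (inner ℝ (Tmap W φ) ψ : ℝ)
      = ∑ i, ∑ j, ∑ k, ∑ l, (1 / 2 : ℝ) * (W i j k l * (φ (k, l) * ψ (i, j))) := by
  simp only [PiLp.inner_apply, RCLike.inner_apply, conj_trivial]
  rw [Fintype.sum_prod_type]
  refine Finset.sum_congr rfl (fun i _ => Finset.sum_congr rfl (fun j _ => ?_))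
  rw [mul_comm]
  show ((1 / 2 : ℝ) * ∑ k, ∑ l, W i j k l * φ (k, l)) * ψ (i, j) = _
  rw [mul_assoc, Finset.sum_mul, Finset.mul_sum]
  refine Finset.sum_congr rfl (fun k _ => ?_)
  rw [Finset.sum_mul, Finset.mul_sum]
  exact Finset.sum_congr rfl (fun l _ => by ring)

private lemma quad_eval (W : Fin n → Fin n → Fin n → Fin n → ℝ)
    (h1 : ∀ i j k l, W i j k l = -W j i k l) (h2 : ∀ i j k l, W i j k l = -W i j l k)
    (h3 : ∀ i j k l, W i j k l = W k l i j) (u v : Fin n → ℝ) :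
    (inner ℝ (Tmap W (WithLp.toLp 2 (fun p : Fin n × Fin n => u p.1 * v p.2 - u p.2 * v p.1) :
        EuclideanSpace ℝ (Fin n × Fin n)))
      (WithLp.toLp 2 (fun p : Fin n × Fin n => u p.1 * v p.2 - u p.2 * v p.1) : EuclideanSpace ℝ (Fin n × Fin n)) : ℝ)
      = 2 * Qf W u v := by
  rw [TinnerL]
  simp only [WithLp.ofLp_toLp]
  have e2 : ∀ i j k l : Fin n, (1 / 2 : ℝ) * (W i j k l *
        ((u k * v l - u l * v k) * (u i * v j - u j * v i)))
      = ((1 / 2 : ℝ) * (W i j k l * (u i * v j * (u k * v l)))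
          - (1 / 2 : ℝ) * (W i j k l * (u j * v i * (u k * v l))))
        - ((1 / 2 : ℝ) * (W i j k l * (u i * v j * (u l * v k)))
          - (1 / 2 : ℝ) * (W i j k l * (u j * v i * (u l * v k)))) := by
    intro i j k l; ring
  simp only [e2, Finset.sum_sub_distrib]
  have hA : ∑ i, ∑ j, ∑ k, ∑ l, (1 / 2 : ℝ) * (W i j k l * (u i * v j * (u k * v l)))
      = (1 / 2 : ℝ) * Qf W u v := by
    simp only [Qf, Finset.mul_sum]
  have hB : ∑ i, ∑ j, ∑ k, ∑ l, (1 / 2 : ℝ) * (W i j k l * (u j * v i * (u k * v l)))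
      = -((1 / 2 : ℝ) * Qf W u v) := by
    rw [Finset.sum_comm]
    simp only [Qf, Finset.mul_sum, ← Finset.sum_neg_distrib]
    refine Finset.sum_congr rfl (fun i _ => Finset.sum_congr rfl (fun j _ =>
      Finset.sum_congr rfl (fun k _ => Finset.sum_congr rfl (fun l _ => ?_))))
    rw [h1 i j k l]; ring
  have hC : ∑ i, ∑ j, ∑ k, ∑ l, (1 / 2 : ℝ) * (W i j k l * (u i * v j * (u l * v k)))
      = -((1 / 2 : ℝ) * Qf W u v) := by
    have : ∀ i j : Fin n, ∑ k, ∑ l, (1 / 2 : ℝ) * (W i j k l * (u i * v j * (u l * v k)))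
        = ∑ k, ∑ l, -((1 / 2 : ℝ) * (W i j k l * (u i * v j * (u k * v l)))) := by
      intro i j
      rw [Finset.sum_comm]
      refine Finset.sum_congr rfl (fun k _ => Finset.sum_congr rfl (fun l _ => ?_))
      rw [h2 i j k l]; ring
    simp only [this, Qf, Finset.mul_sum, ← Finset.sum_neg_distrib]
  have hD : ∑ i, ∑ j, ∑ k, ∑ l, (1 / 2 : ℝ) * (W i j k l * (u j * v i * (u l * v k)))
      = (1 / 2 : ℝ) * Qf W u v := by
    rw [Finset.sum_comm]
    have : ∀ i j : Fin n, ∑ k, ∑ l, (1 / 2 : ℝ) * (W j i k l * (u i * v j * (u l * v k)))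
        = ∑ k, ∑ l, (1 / 2 : ℝ) * (W i j k l * (u i * v j * (u k * v l))) := by
      intro i j
      rw [Finset.sum_comm]
      refine Finset.sum_congr rfl (fun k _ => Finset.sum_congr rfl (fun l _ => ?_))
      have e6 : W j i l k = W i j k l := by rw [h1 i j k l, h2 j i k l]; ring
      rw [e6]
    calc ∑ j, ∑ i, ∑ k, ∑ l, (1 / 2 : ℝ) * (W i j k l * (u j * v i * (u l * v k)))
        = ∑ i, ∑ j, ∑ k, ∑ l, (1 / 2 : ℝ) * (W j i k l * (u i * v j * (u l * v k))) := rfl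
      _ = ∑ i, ∑ j, ∑ k, ∑ l, (1 / 2 : ℝ) * (W i j k l * (u i * v j * (u k * v l))) := by
          exact Finset.sum_congr rfl (fun i _ => Finset.sum_congr rfl (fun j _ => this i j))
      _ = (1 / 2 : ℝ) * Qf W u v := by simp only [Qf, Finset.mul_sum]
  rw [hA, hB, hC, hD]
  ring

private lemma norm_eval (u v : Fin n → ℝ) (φ : EuclideanSpace ℝ (Fin n × Fin n))
    (hφ : ∀ p : Fin n × Fin n, φ p = u p.1 * v p.2 - u p.2 * v p.1) :
    (inner ℝ φ φ : ℝ)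
      = 2 * ((∑ a, u a ^ 2) * (∑ b, v b ^ 2)) - 2 * (∑ a, u a * v a) ^ 2 := by
  simp only [PiLp.inner_apply, RCLike.inner_apply, conj_trivial, hφ]
  rw [Fintype.sum_prod_type]
  have e : ∀ i j : Fin n, (u i * v j - u j * v i) * (u i * v j - u j * v i)
      = (u i ^ 2 * v j ^ 2 + u j ^ 2 * v i ^ 2) - 2 * ((u i * v i) * (u j * v j)) := by
    intro i j; ring
  calc ∑ i, ∑ j, (u i * v j - u j * v i) * (u i * v j - u j * v i)
      = ∑ i, ∑ j, ((u i ^ 2 * v j ^ 2 + u j ^ 2 * v i ^ 2) - 2 * ((u i * v i) * (u j * v j)))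
        := Finset.sum_congr rfl (fun i _ => Finset.sum_congr rfl (fun j _ => e i j))
    _ = ((∑ i, ∑ j, u i ^ 2 * v j ^ 2) + ∑ i, ∑ j, u j ^ 2 * v i ^ 2)
        - ∑ i, ∑ j, 2 * ((u i * v i) * (u j * v j)) := by
        simp only [Finset.sum_add_distrib, Finset.sum_sub_distrib]
    _ = 2 * ((∑ a, u a ^ 2) * (∑ b, v b ^ 2)) - 2 * (∑ a, u a * v a) ^ 2 := by
        rw [Finset.sum_comm (f := fun i j => u j ^ 2 * v i ^ 2)]
        rw [← Finset.sum_mul_sum]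
        have e4 : ∑ i, ∑ j, 2 * ((u i * v i) * (u j * v j))
            = 2 * ((∑ a, u a * v a) * (∑ a, u a * v a)) := by
          rw [Finset.sum_mul_sum (f := fun a => u a * v a) (g := fun a => u a * v a),
            Finset.mul_sum]
          exact Finset.sum_congr rfl (fun i _ => by rw [Finset.mul_sum])
        rw [e4]
        ring


private lemma norm_eval' (u v : Fin n → ℝ) (φ : EuclideanSpace ℝ (Fin n × Fin n))
    (hφ : ∀ p : Fin n × Fin n, φ p = u p.1 * v p.2 - u p.2 * v p.1) :
    ‖φ‖ ^ 2 = 2 * ((∑ a, u a ^ 2) * (∑ b, v b ^ 2)) - 2 * (∑ a, u a * v a) ^ 2 := by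
  rw [← real_inner_self_eq_norm_sq]
  exact norm_eval u v φ hφ

private lemma sum_pm (i k : Fin n) (ε : ℝ) (f : Fin n → ℝ) :
    ∑ a, ((if a = i then (1 : ℝ) else 0) + ε * (if a = k then 1 else 0)) * f a
      = f i + ε * f k := by
  have e : ∀ a : Fin n, ((if a = i then (1 : ℝ) else 0) + ε * (if a = k then 1 else 0)) * f a
      = (if a = i then f a else 0) + ε * (if a = k then f a else 0) := by
    intro a
    simp [add_mul, ite_mul, one_mul, zero_mul, mul_assoc]
  simp only [e, Finset.sum_add_distrib, ← Finset.mul_sum]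
  simp [Finset.sum_ite_eq']

private lemma Qf_nested (W : Fin n → Fin n → Fin n → Fin n → ℝ) (u v : Fin n → ℝ) :
    Qf W u v = ∑ a, u a * (∑ b, v b * (∑ c, u c * (∑ d, v d * W a b c d))) := by
  simp only [Qf, Finset.mul_sum]
  exact Finset.sum_congr rfl (fun a _ => Finset.sum_congr rfl (fun b _ =>
    Finset.sum_congr rfl (fun c _ => Finset.sum_congr rfl (fun d _ => by ring))))

private lemma Qeval (W : Fin n → Fin n → Fin n → Fin n → ℝ) (i j k l : Fin n) (ε δ : ℝ) :
    Qf W (fun a => (if a = i then (1 : ℝ) else 0) + ε * (if a = k then 1 else 0))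
      (fun b => (if b = j then (1 : ℝ) else 0) + δ * (if b = l then 1 else 0))
    = (((W i j i j + δ * W i j i l) + ε * (W i j k j + δ * W i j k l))
        + δ * ((W i l i j + δ * W i l i l) + ε * (W i l k j + δ * W i l k l)))
      + ε * ((((W k j i j + δ * W k j i l) + ε * (W k j k j + δ * W k j k l))
        + δ * ((W k l i j + δ * W k l i l) + ε * (W k l k j + δ * W k l k l)))) := by
  rw [Qf_nested]
  simp only [sum_pm]

private lemma Spm (i k : Fin n) (h : i ≠ k) (ε : ℝ) :
    ∑ a, ((if a = i then (1 : ℝ) else 0) + ε * (if a = k then 1 else 0)) ^ 2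
      = 1 + ε ^ 2 := by
  have e : ∀ a : Fin n, ((if a = i then (1 : ℝ) else 0) + ε * (if a = k then 1 else 0)) ^ 2
      = (if a = i then 1 else 0) + ε ^ 2 * (if a = k then 1 else 0) := by
    intro a
    by_cases ha : a = i <;> by_cases hb : a = k
    · exact absurd (ha.symm.trans hb) h
    · simp [ha, hb, h]
    · simp [ha, hb, (Ne.symm h)]
    · simp [ha, hb]
  simp only [e, Finset.sum_add_distrib, ← Finset.mul_sum]
  simp [Finset.sum_ite_eq']

end Aux

set_option maxHeartbeats 1000000 in
theorem stmt_13 (n : ℕ) (hn : 4 ≤ n) (ω : ℝ)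
    (W : Fin n → Fin n → Fin n → Fin n → ℝ)
    (hsym : (∀ i j k l, W i j k l = -W j i k l) ∧ (∀ i j k l, W i j k l = -W i j l k) ∧
      (∀ i j k l, W i j k l = W k l i j))
    (hbianchi : ∀ i j k l, W i j k l + W j k i l + W k i j l = 0)
    -- every eigenvalue of W, as an operator on 2-forms, has absolute value at most ω
    (heig : ∀ (lam : ℝ) (φ : Matrix (Fin n) (Fin n) ℝ), φ ≠ 0 → φ.transpose = -φ →
      (∀ i j, (1 / 2 : ℝ) * (∑ k, ∑ l, W i j k l * φ k l) = lam * φ i j) →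
      |lam| ≤ ω) :
    ∀ i j k l, |W i j k l| ≤ 4 / 3 * ω := by
  obtain ⟨h1, h2, h3⟩ := hsym
  -- T is symmetric
  have hTsym : ∀ φ ψ : EuclideanSpace ℝ (Fin n × Fin n),
      ⟪Tmap W φ, ψ⟫ = ⟪φ, Tmap W ψ⟫ := by
    intro φ ψ
    have hL : ⟪Tmap W φ, ψ⟫
        = ∑ i, ∑ j, ∑ k, ∑ l, (1 / 2 : ℝ) * (W i j k l * (φ (k, l) * ψ (i, j))) := by
      simp only [PiLp.inner_apply, RCLike.inner_apply, conj_trivial]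
      rw [Fintype.sum_prod_type]
      refine Finset.sum_congr rfl (fun i _ => Finset.sum_congr rfl (fun j _ => ?_))
      rw [mul_comm]
      show ((1 / 2 : ℝ) * ∑ k, ∑ l, W i j k l * φ (k, l)) * ψ (i, j) = _
      rw [mul_assoc, Finset.sum_mul, Finset.mul_sum]
      refine Finset.sum_congr rfl (fun k _ => ?_)
      rw [Finset.sum_mul, Finset.mul_sum]
      exact Finset.sum_congr rfl (fun l _ => by ring)
    have hR : ⟪φ, Tmap W ψ⟫
        = ∑ i, ∑ j, ∑ k, ∑ l, (1 / 2 : ℝ) * (W i j k l * (φ (i, j) * ψ (k, l))) := by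
      simp only [PiLp.inner_apply, RCLike.inner_apply, conj_trivial]
      rw [Fintype.sum_prod_type]
      refine Finset.sum_congr rfl (fun i _ => Finset.sum_congr rfl (fun j _ => ?_))
      rw [mul_comm]
      show φ (i, j) * ((1 / 2 : ℝ) * ∑ k, ∑ l, W i j k l * ψ (k, l)) = _
      rw [Finset.mul_sum, Finset.mul_sum]
      refine Finset.sum_congr rfl (fun k _ => ?_)
      rw [Finset.mul_sum, Finset.mul_sum]
      exact Finset.sum_congr rfl (fun l _ => by ring)
    rw [hL, hR]
    rw [sum4comm (fun i j k l => (1 / 2 : ℝ) * (W i j k l * (φ (i, j) * ψ (k, l))))]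
    refine Finset.sum_congr rfl (fun i _ => Finset.sum_congr rfl (fun j _ =>
      Finset.sum_congr rfl (fun k _ => Finset.sum_congr rfl (fun l _ => ?_))))
    rw [h3 k l i j]
  have hTA : ∀ φ ∈ Asub n, Tmap W φ ∈ Asub n := by
    intro φ hφ i j
    show (1 / 2 : ℝ) * ∑ k, ∑ l, W j i k l * φ (k, l)
        = -((1 / 2 : ℝ) * ∑ k, ∑ l, W i j k l * φ (k, l))
    have e : ∀ k l : Fin n, W j i k l * φ (k, l) = -(W i j k l * φ (k, l)) := by
      intro k l; rw [h1 i j k l]; ring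
    simp only [e, Finset.sum_neg_distrib]
    ring
  set S := (Tmap W).restrict hTA with hSdef
  have hS : S.IsSymmetric := by
    intro x y
    rw [Submodule.coe_inner, Submodule.coe_inner, LinearMap.restrict_coe_apply,
      LinearMap.restrict_coe_apply]
    exact hTsym x y
  obtain ⟨i0, j0, hij⟩ : ∃ i0 j0 : Fin n, i0 ≠ j0 :=
    ⟨⟨0, by omega⟩, ⟨1, by omega⟩, by simp [Fin.ext_iff]⟩
  haveI : Nontrivial ↥(Asub n) := by
    obtain ⟨φ0, hmem, hne⟩ : ∃ φ0 : EuclideanSpace ℝ (Fin n × Fin n),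
        φ0 ∈ Asub n ∧ φ0 ≠ 0 := by
      refine ⟨WithLp.toLp 2 (fun p : Fin n × Fin n => (if p = (i0, j0) then (1 : ℝ) else 0)
        - (if (p.2, p.1) = (i0, j0) then 1 else 0)), ?_, ?_⟩
      · intro i j
        show (if ((j, i) : Fin n × Fin n) = (i0, j0) then (1 : ℝ) else 0)
            - (if ((i, j) : Fin n × Fin n) = (i0, j0) then 1 else 0)
          = -((if ((i, j) : Fin n × Fin n) = (i0, j0) then (1 : ℝ) else 0)
            - (if ((j, i) : Fin n × Fin n) = (i0, j0) then 1 else 0))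
        ring
      · intro h
        have h5 : (if ((i0, j0) : Fin n × Fin n) = (i0, j0) then (1 : ℝ) else 0)
            - (if ((j0, i0) : Fin n × Fin n) = (i0, j0) then 1 else 0) = 0 := congrArg (fun ψ : EuclideanSpace ℝ (Fin n × Fin n) => ψ (i0, j0)) h
        rw [if_pos rfl, if_neg (by simp [Prod.ext_iff]; intro h'; exact absurd h'.symm hij)] at h5
        norm_num at h5
    exact ⟨⟨φ0, hmem⟩, 0, by simp only [ne_eq, Submodule.mk_eq_zero]; exact hne⟩
  haveI := FiniteDimensional.proper_rclike ℝ ↥(Asub n)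
  set T' := hS.toSelfAdjoint with hT'def
  -- from an eigenpair, deduce the eigenvalue bound via `heig`
  have key : ∀ (lam : ℝ) (y : ↥(Asub n)), y ≠ 0 → S y = lam • y → |lam| ≤ ω := by
    intro lam y hy hSy
    have hyE : (y : EuclideanSpace ℝ (Fin n × Fin n)) ≠ 0 := by
      simpa [ne_eq, ZeroMemClass.coe_eq_zero] using hy
    refine heig lam (Matrix.of fun i j => (y : EuclideanSpace ℝ (Fin n × Fin n)) (i, j)) ?_ ?_ ?_
    · intro h
      apply hyE
      apply PiLp.ext; intro p
      exact congrFun (congrFun h p.1) p.2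
    · ext i j
      show (y : EuclideanSpace ℝ (Fin n × Fin n)) (j, i)
          = -(y : EuclideanSpace ℝ (Fin n × Fin n)) (i, j)
      exact y.2 i j
    · intro i j
      have h7 := congrArg Subtype.val hSy
      rw [LinearMap.restrict_coe_apply] at h7
      have h8 := congrArg (fun ψ : EuclideanSpace ℝ (Fin n × Fin n) => ψ (i, j)) h7
      exact h8
  obtain ⟨x, hx⟩ : ∃ x : ↥(Asub n), x ≠ 0 := exists_ne 0
  obtain ⟨x₀, hx₀mem, hmax⟩ := (isCompact_sphere (0 : ↥(Asub n)) ‖x‖).exists_isMaxOn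
    ⟨x, by simp⟩ T'.val.reApplyInnerSelf_continuous.continuousOn
  obtain ⟨x₁, hx₁mem, hmin⟩ := (isCompact_sphere (0 : ↥(Asub n)) ‖x‖).exists_isMinOn
    ⟨x, by simp⟩ T'.val.reApplyInnerSelf_continuous.continuousOn
  have hnx₀ : ‖x₀‖ = ‖x‖ := by simpa using hx₀mem
  have hnx₁ : ‖x₁‖ = ‖x‖ := by simpa using hx₁mem
  have hxnorm : ‖x‖ ≠ 0 := by simpa using hx
  have hx₀ne : x₀ ≠ 0 := by intro h; rw [h, norm_zero] at hnx₀; exact hxnorm hnx₀.symm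
  have hx₁ne : x₁ ≠ 0 := by intro h; rw [h, norm_zero] at hnx₁; exact hxnorm hnx₁.symm
  have hmax' : IsMaxOn T'.val.reApplyInnerSelf (Metric.sphere 0 ‖x₀‖) x₀ := by rwa [hnx₀]
  have hmin' : IsMinOn T'.val.reApplyInnerSelf (Metric.sphere 0 ‖x₁‖) x₁ := by rwa [hnx₁]
  have hev0 := T'.prop.hasEigenvector_of_isLocalExtrOn hx₀ne (Or.inr hmax'.localize)
  have hev1 := T'.prop.hasEigenvector_of_isLocalExtrOn hx₁ne (Or.inl hmin'.localize)
  set lam0 : ℝ := T'.val.rayleighQuotient x₀ with hlam0def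
  set lam1 : ℝ := T'.val.rayleighQuotient x₁ with hlam1def
  have hSx₀ : S x₀ = lam0 • x₀ := by
    have h9 := Module.End.mem_eigenspace_iff.mp hev0.1
    exact h9
  have hSx₁ : S x₁ = lam1 • x₁ := by
    have h9 := Module.End.mem_eigenspace_iff.mp hev1.1
    exact h9
  have hlam0 : |lam0| ≤ ω := key lam0 x₀ hx₀ne hSx₀
  have hlam1 : |lam1| ≤ ω := key lam1 x₁ hx₁ne hSx₁
  have hω : 0 ≤ ω := le_trans (abs_nonneg _) hlam0
  -- Rayleigh quotient expressed through the inner product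
  have hray : ∀ z : ↥(Asub n), T'.val.reApplyInnerSelf z = ⟪Tmap W (z : _), (z : _)⟫ := by
    intro z
    show RCLike.re ⟪(S z : EuclideanSpace ℝ (Fin n × Fin n)), (z : _)⟫ = _
    rw [LinearMap.restrict_coe_apply]
    simp
  have hv : ∀ (z : ↥(Asub n)) (lam : ℝ), S z = lam • z →
      T'.val.reApplyInnerSelf z = lam * ‖z‖ ^ 2 := by
    intro z lam hSz
    rw [hray]
    have hTz : Tmap W (z : EuclideanSpace ℝ (Fin n × Fin n)) = lam • (z : _) := by
      have h7 := congrArg Subtype.val hSz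
      rwa [LinearMap.restrict_coe_apply] at h7
    rw [hTz, real_inner_smul_left, real_inner_self_eq_norm_sq]
    rfl
  have hquadA : ∀ y : ↥(Asub n), y ≠ 0 →
      |⟪Tmap W (y : EuclideanSpace ℝ (Fin n × Fin n)), (y : _)⟫| ≤ ω * ‖y‖ ^ 2 := by
    intro y hyne
    have hφn : ‖y‖ ≠ 0 := by simpa using hyne
    have hφpos : 0 < ‖y‖ := lt_of_le_of_ne (norm_nonneg _) (Ne.symm hφn)
    set c : ℝ := ‖x‖ / ‖y‖ with hcdef
    have hcpos : 0 < c := div_pos (lt_of_le_of_ne (norm_nonneg _) (Ne.symm hxnorm)) hφpos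
    have hnz : ‖c • y‖ = ‖x‖ := by
      rw [norm_smul, Real.norm_eq_abs, abs_of_pos hcpos, hcdef, div_mul_cancel₀ _ hφn]
    have hub : (T'.val).reApplyInnerSelf (c • y) ≤ (T'.val).reApplyInnerSelf x₀ :=
      hmax (a := c • y) (mem_sphere_zero_iff_norm.mpr hnz)
    have hlb : (T'.val).reApplyInnerSelf x₁ ≤ (T'.val).reApplyInnerSelf (c • y) :=
      hmin (a := c • y) (mem_sphere_zero_iff_norm.mpr hnz)
    rw [hray (c • y), hv x₀ lam0 hSx₀] at hub
    rw [hray (c • y), hv x₁ lam1 hSx₁] at hlb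
    have hcy : ((c • y : ↥(Asub n)) : EuclideanSpace ℝ (Fin n × Fin n)) = c • (y : _) :=
      rfl
    rw [hcy, map_smul] at hub hlb
    rw [real_inner_smul_left, real_inner_smul_right] at hub hlb
    rw [hnx₀] at hub
    rw [hnx₁] at hlb
    have hxc : ‖x‖ = c * ‖y‖ := by rw [hcdef, div_mul_cancel₀ _ hφn]
    rw [hxc] at hub hlb
    rw [abs_le] at hlam0 hlam1
    rw [abs_le]
    constructor
    · nlinarith [hlam1.1, hlb, mul_pos hcpos hcpos, sq_nonneg ‖y‖]
    · nlinarith [hlam0.2, hub, mul_pos hcpos hcpos, sq_nonneg ‖y‖]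
  have hquad : ∀ φ : EuclideanSpace ℝ (Fin n × Fin n), φ ∈ Asub n →
      |⟪Tmap W φ, φ⟫| ≤ ω * ‖φ‖ ^ 2 := by
    intro φ hφ
    by_cases hz : φ = 0
    · simp [hz]
    · exact hquadA ⟨φ, hφ⟩ (by simpa [ne_eq, Submodule.mk_eq_zero] using hz)
  have hQb : ∀ u v : Fin n → ℝ, |Qf W u v| ≤ ω * ((∑ a, u a ^ 2) * (∑ b, v b ^ 2)) := by
    intro u v
    have hmem : (WithLp.toLp 2 (fun p : Fin n × Fin n => u p.1 * v p.2 - u p.2 * v p.1) :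
        EuclideanSpace ℝ (Fin n × Fin n)) ∈ Asub n := by
      intro a b
      show u b * v a - u a * v b = -(u a * v b - u b * v a)
      ring
    have h := hquad _ hmem
    rw [quad_eval W h1 h2 h3 u v] at h
    rw [norm_eval' u v _ (fun p => rfl), abs_mul] at h
    have h2abs : |(2 : ℝ)| = 2 := by norm_num
    rw [h2abs] at h
    nlinarith [sq_nonneg (∑ a, u a * v a), hω, abs_nonneg (Qf W u v),
      mul_nonneg hω (sq_nonneg (∑ a, u a * v a))]
  have hQB : ∀ (a b c d : Fin n), a ≠ c → b ≠ d → ∀ ε δ : ℝ,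
      |(((W a b a b + δ * W a b a d) + ε * (W a b c b + δ * W a b c d))
          + δ * ((W a d a b + δ * W a d a d) + ε * (W a d c b + δ * W a d c d)))
        + ε * ((((W c b a b + δ * W c b a d) + ε * (W c b c b + δ * W c b c d))
          + δ * ((W c d a b + δ * W c d a d) + ε * (W c d c b + δ * W c d c d))))|
      ≤ ω * ((1 + ε ^ 2) * (1 + δ ^ 2)) := by
    intro a b c d hac hbd ε δ
    have h := hQb (fun x => (if x = a then (1 : ℝ) else 0) + ε * (if x = c then 1 else 0))
      (fun x => (if x = b then (1 : ℝ) else 0) + δ * (if x = d then 1 else 0))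
    rw [Qeval W a b c d ε δ, Spm a c hac ε, Spm b d hbd δ] at h
    exact h
  have htwo : ∀ a b : Fin n, a ≠ b → |W a b a b| ≤ ω := by
    intro a b hab
    have h := hQB a b b a hab (Ne.symm hab) 0 0
    norm_num at h
    exact h
  have hone : ∀ a b d : Fin n, a ≠ b → a ≠ d → b ≠ d → |W a b a d| ≤ ω := by
    intro a b d hab had hbd
    have p := hQB a b b d hab hbd 0 1
    have m := hQB a b b d hab hbd 0 (-1)
    have hs : W a d a b = W a b a d := h3 a d a b
    rw [abs_le] at p m ⊢
    constructor <;> linarith [p.1, p.2, m.1, m.2, hs]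
  have hωle : ∀ r : ℝ, |r| ≤ ω → |r| ≤ 4 / 3 * ω := by
    intro r hr; linarith [abs_nonneg r]
  intro i j k l
  rcases eq_or_ne i j with hij | hij
  · have hz : W i j k l = 0 := by rw [hij]; linarith [h1 j j k l]
    rw [hz, abs_zero]; linarith
  rcases eq_or_ne k l with hkl | hkl
  · have hz : W i j k l = 0 := by rw [hkl]; linarith [h2 i j l l]
    rw [hz, abs_zero]; linarith
  rcases eq_or_ne i k with hik | hik
  · rcases eq_or_ne j l with hjl | hjl
    · have e : W i j k l = W i j i j := by rw [← hik, ← hjl]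
      rw [e]; exact hωle _ (htwo i j hij)
    · have e : W i j k l = W i j i l := by rw [← hik]
      rw [e]
      exact hωle _ (hone i j l hij (by rw [hik]; exact hkl) hjl)
  rcases eq_or_ne i l with hil | hil
  · have e : W i j k l = -W i j i k := by rw [← hil, h2 i j i k]; ring
    rw [e, abs_neg]
    rcases eq_or_ne j k with hjk | hjk
    · have e2 : W i j i k = W i j i j := by rw [← hjk]
      rw [e2]; exact hωle _ (htwo i j hij)
    · exact hωle _ (hone i j k hij (by rw [hil]; exact Ne.symm hkl) hjk)
  rcases eq_or_ne j k with hjk | hjk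
  · have e : W i j k l = -W j i j l := by rw [← hjk, h1 j i j l]; ring
    rw [e, abs_neg]
    exact hωle _ (hone j i l (Ne.symm hij) (by rw [hjk]; exact hkl) hil)
  rcases eq_or_ne j l with hjl | hjl
  · have e : W i j k l = W j i j k := by rw [← hjl, h1 i j k j, h2 j i j k]
    rw [e]
    exact hωle _ (hone j i k (Ne.symm hij) hjk hik)
  -- all four indices distinct
  have B1 := hQB i j k l hik hjl 1 1
  have B2 := hQB i j k l hik hjl (-1) 1
  have B3 := hQB i j k l hik hjl 1 (-1)
  have B4 := hQB i j k l hik hjl (-1) (-1)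
  have C1 := hQB i j l k hil hjk 1 1
  have C2 := hQB i j l k hil hjk (-1) 1
  have C3 := hQB i j l k hil hjk 1 (-1)
  have C4 := hQB i j l k hil hjk (-1) (-1)
  have s1 : W k j i l = W i l k j := h3 k j i l
  have s2 : W k l i j = W i j k l := h3 k l i j
  have s3 : W l j i k = W i k l j := h3 l j i k
  have s4 : W l k i j = W i j l k := h3 l k i j
  have a1 : W i j l k = -W i j k l := by rw [h2 i j k l]; ring
  have a2 : W l i k j = -W i l k j := by rw [h1 i l k j]; ring
  have hb := hbianchi i k l j
  rw [abs_le] at B1 B2 B3 B4 C1 C2 C3 C4 ⊢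
  constructor <;>
    linarith [B1.1, B1.2, B2.1, B2.2, B3.1, B3.2, B4.1, B4.2,
      C1.1, C1.2, C2.1, C2.2, C3.1, C3.2, C4.1, C4.2, s1, s2, s3, s4, a1, a2, hb, hω]
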